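/- Stabilization of triangles (key step in the proof that increasing by one all dimensions along a wavy line preserves existence of solutions of the bow moment map equation, Theorem on supersymmetric increments, part (i)): Let (A, B⁻, B⁺, a, b) be a triangle on finite-dimensional complex vector spaces (V⁻, V⁺), i.e. it satisfies conditions (a), (S1) and (S2). Define on V⁻ ⊕ ℂ and V⁺ ⊕ ℂ the maps A'(x,λ) = (A(x), λ), B⁻'(x,λ) = (B⁻(x), 0), B⁺'(y,μ) = (B⁺(y), 0), the vector a' = (a, 0) ∈ V⁺ ⊕ ℂ, and b'(x,λ) = b(x). Then (A', B⁻', B⁺', a', b') is again a triangle on (V⁻ ⊕ ℂ, V⁺ ⊕ ℂ): it satisfies conditions (a), (S1) and (S2). -/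
import Mathlib


/-- **Stabilization of triangles.**  Let `(A, B⁻, B⁺, a, b)` be a triangle on
finite-dimensional complex vector spaces `(V⁻, V⁺)`: it satisfies condition (a)
`B⁺ ∘ A - A ∘ B⁻ + (x ↦ b x • a) = 0`, condition (S1) (the only `B⁻`-invariant subspace
contained in `ker A ∩ ker b` is `0`), and condition (S2) (the only `B⁺`-invariant subspace
containing `Im A + ℂ·a` is everything).  Define on `V⁻ ⊕ ℂ` and `V⁺ ⊕ ℂ` the maps
`A' (x, l) = (A x, l)`, `B⁻' (x, l) = (B⁻ x, 0)`, `B⁺' (y, m) = (B⁺ y, 0)`, the vector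
`a' = (a, 0)`, and `b' (x, l) = b x`.  Then `(A', B⁻', B⁺', a', b')` again satisfies
conditions (a), (S1) and (S2). -/
theorem triangle_stabilization
    {Vm Vp : Type*} [AddCommGroup Vm] [Module ℂ Vm] [FiniteDimensional ℂ Vm]
    [AddCommGroup Vp] [Module ℂ Vp] [FiniteDimensional ℂ Vp]
    (A : Vm →ₗ[ℂ] Vp) (Bm : Vm →ₗ[ℂ] Vm) (Bp : Vp →ₗ[ℂ] Vp)
    (b : Vm →ₗ[ℂ] ℂ) (a : Vp)
    (ha : ∀ x : Vm, Bp (A x) - A (Bm x) + b x • a = 0)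
    (hS1 : ∀ S : Submodule ℂ Vm, (∀ x ∈ S, Bm x ∈ S) →
      S ≤ LinearMap.ker A ⊓ LinearMap.ker b → S = ⊥)
    (hS2 : ∀ T : Submodule ℂ Vp, (∀ y ∈ T, Bp y ∈ T) →
      LinearMap.range A ≤ T → a ∈ T → T = ⊤)
    (A' : Vm × ℂ →ₗ[ℂ] Vp × ℂ) (hA' : ∀ (x : Vm) (l : ℂ), A' (x, l) = (A x, l))
    (Bm' : Vm × ℂ →ₗ[ℂ] Vm × ℂ) (hBm' : ∀ (x : Vm) (l : ℂ), Bm' (x, l) = (Bm x, 0))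
    (Bp' : Vp × ℂ →ₗ[ℂ] Vp × ℂ) (hBp' : ∀ (y : Vp) (m : ℂ), Bp' (y, m) = (Bp y, 0))
    (b' : Vm × ℂ →ₗ[ℂ] ℂ) (hb' : ∀ (x : Vm) (l : ℂ), b' (x, l) = b x) :
    (∀ z : Vm × ℂ, Bp' (A' z) - A' (Bm' z) + b' z • ((a, 0) : Vp × ℂ) = 0) ∧
    (∀ S : Submodule ℂ (Vm × ℂ), (∀ z ∈ S, Bm' z ∈ S) →
      S ≤ LinearMap.ker A' ⊓ LinearMap.ker b' → S = ⊥) ∧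
    (∀ T : Submodule ℂ (Vp × ℂ), (∀ z ∈ T, Bp' z ∈ T) →
      LinearMap.range A' ≤ T → ((a, 0) : Vp × ℂ) ∈ T → T = ⊤) := by

  refine ⟨?_, ?_, ?_⟩
  · rintro ⟨x, l⟩
    rw [hA' x l, hBm' x l, hBp' (A x) l, hb' x l, hA' (Bm x) 0]
    have := ha x
    ext
    · simpa using this
    · simp
  · intro S hinv hle
    set S0 : Submodule ℂ Vm := S.map (LinearMap.fst ℂ Vm ℂ) with hS0
    have hzero : ∀ z ∈ S, (z : Vm × ℂ).2 = 0 := by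
      intro z hz
      have hk := (hle hz).1
      have : A' z = 0 := hk
      rw [show z = (z.1, z.2) from rfl, hA' z.1 z.2] at this
      exact congrArg Prod.snd this
    have hS0inv : ∀ x ∈ S0, Bm x ∈ S0 := by
      rintro x ⟨z, hz, rfl⟩
      refine ⟨Bm' z, hinv z hz, ?_⟩
      rw [show z = (z.1, z.2) from rfl, hBm' z.1 z.2]
      rfl
    have hS0le : S0 ≤ LinearMap.ker A ⊓ LinearMap.ker b := by
      rintro x ⟨z, hz, rfl⟩
      have hk := (hle hz).1
      have hkb := (hle hz).2
      have hA : A' z = 0 := hk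
      have hb'' : b' z = 0 := hkb
      rw [show z = (z.1, z.2) from rfl, hA' z.1 z.2] at hA
      rw [show z = (z.1, z.2) from rfl, hb' z.1 z.2] at hb''
      exact ⟨congrArg Prod.fst hA, hb''⟩
    have hbot := hS1 S0 hS0inv hS0le
    rw [Submodule.eq_bot_iff]
    intro z hz
    have h1 : z.1 ∈ S0 := ⟨z, hz, rfl⟩
    rw [hbot] at h1
    have h2 := hzero z hz
    ext
    · exact h1
    · exact h2
  · intro T hinv hrange hatom
    set T0 : Submodule ℂ Vp := T.comap (LinearMap.inl ℂ Vp ℂ) with hT0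
    have hT0inv : ∀ y ∈ T0, Bp y ∈ T0 := by
      intro y hy
      have := hinv ((y, 0) : Vp × ℂ) hy
      rw [hBp' y 0] at this
      exact this
    have hT0range : LinearMap.range A ≤ T0 := by
      rintro y ⟨x, rfl⟩
      have : A' (x, 0) ∈ T := hrange ⟨(x, 0), rfl⟩
      rw [hA' x 0] at this
      exact this
    have htop := hS2 T0 hT0inv hT0range hatom
    rw [Submodule.eq_top_iff']
    intro z
    have h1 : ((z.1, 0) : Vp × ℂ) ∈ T := by
      have : z.1 ∈ T0 := htop ▸ Submodule.mem_top
      exact this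
    have h01 : ((0, (1:ℂ)) : Vp × ℂ) ∈ T := by
      have : A' (0, 1) ∈ T := hrange ⟨(0, 1), rfl⟩
      rw [hA' 0 1] at this
      simpa using this
    have h2 : ((0, z.2) : Vp × ℂ) ∈ T := by
      have := T.smul_mem z.2 h01
      simpa using this
    have := T.add_mem h1 h2
    simpa using this
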